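/- Let A, B, C be positive integers with B² = 4AC (discriminant D = 0), and let q(m,n) = A·m² + B·m·n + C·n². Then the series whose terms are 1/( e(x,y) · e(x,x+y) · e(y,x+y) ), summed over all pairs (x,y) ∈ S, converges and its sum equals (1/3)·(1/B)³. (This is the paper's Theorem 7, formula (top6), for the topograph of q rooted at the standard-basis edge, with root edge label e₀ = B.) -/

import Mathlib

/-- The binary quadratic form `q(m,n) = A m² + B m n + C n²`, with real values. -/
noncomputable def q (A B C : ℤ) (v : ℤ × ℤ) : ℝ :=
  (A : ℝ) * (v.1 : ℝ) ^ 2 + (B : ℝ) * (v.1 : ℝ) * (v.2 : ℝ) + (C : ℝ) * (v.2 : ℝ) ^ 2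

/-- The edge label `e(u,v) = q(u+v) − q(u) − q(v)` (twice the polar form of `q`). -/
noncomputable def eLab (A B C : ℤ) (u v : ℤ × ℤ) : ℝ :=
  q A B C (u + v) - q A B C u - q A B C v

/-- Pairs of lattice vectors with nonnegative coordinates and determinant one. -/
def S : Set ((ℤ × ℤ) × (ℤ × ℤ)) :=
  {p | 0 ≤ p.1.1 ∧ 0 ≤ p.1.2 ∧ 0 ≤ p.2.1 ∧ 0 ≤ p.2.2 ∧
    p.1.1 * p.2.2 - p.1.2 * p.2.1 = 1}

namespace Topo

def node : List Bool → (ℤ × ℤ) × (ℤ × ℤ)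
  | [] => ((1, 0), (0, 1))
  | b :: w => if b then ((node w).1, (node w).1 + (node w).2)
      else ((node w).1 + (node w).2, (node w).2)

lemma node_mem (w : List Bool) : node w ∈ S := by
  induction w with
  | nil => simp [node, S]
  | cons b w ih =>
    obtain ⟨h1, h2, h3, h4, h5⟩ := ih
    cases b <;>
      simp only [node, if_true, if_false, S, Set.mem_setOf_eq, Prod.fst_add, Prod.snd_add,
        Bool.false_eq_true, ite_false, ite_true] <;>
      exact ⟨by linarith, by linarith, by linarith, by linarith, by linear_combination h5⟩

lemma node_inj : Function.Injective node := by
  intro w w' h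
  induction w generalizing w' with
  | nil =>
    cases w' with
    | nil => rfl
    | cons b w' =>
      exfalso
      obtain ⟨h1, h2, h3, h4, h5⟩ := node_mem w'
      cases b <;> simp only [node, if_true, if_false, Bool.false_eq_true, ite_false,
        ite_true, Prod.ext_iff, Prod.fst_add, Prod.snd_add] at h <;> omega
  | cons b w ih =>
    cases w' with
    | nil =>
      exfalso
      obtain ⟨h1, h2, h3, h4, h5⟩ := node_mem w
      cases b <;> simp only [node, if_true, if_false, Bool.false_eq_true, ite_false,
        ite_true, Prod.ext_iff, Prod.fst_add, Prod.snd_add] at h <;> omega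
    | cons b' w' =>
      obtain ⟨h1, h2, h3, h4, h5⟩ := node_mem w
      obtain ⟨h1', h2', h3', h4', h5'⟩ := node_mem w'
      cases b <;> cases b' <;>
        simp only [node, if_true, if_false, Bool.false_eq_true, ite_false,
          ite_true, Prod.ext_iff, Prod.fst_add, Prod.snd_add] at h
      · rw [ih (w' := w') (by simp only [Prod.ext_iff]; omega)]
      · exfalso
        nlinarith [h.1.1, h.1.2, h.2.1, h.2.2, h5, h5', h1, h2, h3, h4, h1', h2', h3', h4',
          mul_nonneg h1 h4, mul_nonneg h2 h3]
      · exfalso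
        nlinarith [h.1.1, h.1.2, h.2.1, h.2.2, h5, h5', h1, h2, h3, h4, h1', h2', h3', h4',
          mul_nonneg h1 h4, mul_nonneg h2 h3]
      · rw [ih (w' := w') (by simp only [Prod.ext_iff]; omega)]

lemma node_surj_aux : ∀ n : ℕ, ∀ p ∈ S,
    (p.1.1 + p.1.2 + p.2.1 + p.2.2).toNat ≤ n → ∃ w, node w = p := by
  intro n
  induction n with
  | zero =>
    rintro ⟨⟨x1, x2⟩, ⟨y1, y2⟩⟩ ⟨h1, h2, h3, h4, h5⟩ hm
    exfalso
    replace hm : (x1 + x2 + y1 + y2).toNat ≤ 0 := hm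
    replace h1 : 0 ≤ x1 := h1
    replace h2 : 0 ≤ x2 := h2
    replace h3 : 0 ≤ y1 := h3
    replace h4 : 0 ≤ y2 := h4
    replace h5 : x1 * y2 - x2 * y1 = 1 := h5
    obtain ⟨e1, e2, e3, e4⟩ : x1 = 0 ∧ x2 = 0 ∧ y1 = 0 ∧ y2 = 0 := by omega
    rw [e1, e2] at h5; simp at h5
  | succ n ih =>
    rintro ⟨⟨x1, x2⟩, ⟨y1, y2⟩⟩ ⟨h1, h2, h3, h4, h5⟩ hm
    replace hm : (x1 + x2 + y1 + y2).toNat ≤ n + 1 := hm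
    replace h1 : 0 ≤ x1 := h1
    replace h2 : 0 ≤ x2 := h2
    replace h3 : 0 ≤ y1 := h3
    replace h4 : 0 ≤ y2 := h4
    replace h5 : x1 * y2 - x2 * y1 = 1 := h5
    by_cases hxy : x1 ≤ y1 ∧ x2 ≤ y2
    · have hx0 : 1 ≤ x1 + x2 := by
        rcases (by omega : 1 ≤ x1 + x2 ∨ (x1 = 0 ∧ x2 = 0)) with h | ⟨e1, e2⟩
        · exact h
        · exfalso; rw [e1, e2] at h5; simp at h5
      obtain ⟨w, hw⟩ := ih ((x1, x2), (y1 - x1, y2 - x2))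
        ⟨h1, h2, show (0:ℤ) ≤ y1 - x1 by omega, show (0:ℤ) ≤ y2 - x2 by omega,
          show x1 * (y2 - x2) - x2 * (y1 - x1) = 1 by linear_combination h5⟩
        (show (x1 + x2 + (y1 - x1) + (y2 - x2)).toNat ≤ n by omega)
      refine ⟨true :: w, ?_⟩
      simp only [node, if_true, hw, Prod.mk_add_mk, Prod.mk.injEq, and_true, true_and]
      omega
    · by_cases hyx : y1 ≤ x1 ∧ y2 ≤ x2
      · have hy0 : 1 ≤ y1 + y2 := by
          rcases (by omega : 1 ≤ y1 + y2 ∨ (y1 = 0 ∧ y2 = 0)) with h | ⟨e1, e2⟩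
          · exact h
          · exfalso; rw [e1, e2] at h5; simp at h5
        obtain ⟨w, hw⟩ := ih ((x1 - y1, x2 - y2), (y1, y2))
          ⟨show (0:ℤ) ≤ x1 - y1 by omega, show (0:ℤ) ≤ x2 - y2 by omega, h3, h4,
            show (x1 - y1) * y2 - (x2 - y2) * y1 = 1 by linear_combination h5⟩
          (show ((x1 - y1) + (x2 - y2) + y1 + y2).toNat ≤ n by omega)
        refine ⟨false :: w, ?_⟩
        simp only [node, if_false, Bool.false_eq_true, ite_false, hw, Prod.mk_add_mk,
          Prod.mk.injEq, and_true, true_and]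
        omega
      · refine ⟨[], ?_⟩
        push_neg at hxy hyx
        obtain ⟨e1, e2, e3, e4⟩ : x1 = 1 ∧ x2 = 0 ∧ y1 = 0 ∧ y2 = 1 := by
          rcases (by omega : (y1 < x1 ∧ x2 < y2) ∨ (x1 < y1 ∧ y2 < x2)) with ⟨ha, hb⟩ | ⟨ha, hb⟩
          · have h6 : y1 + x2 ≤ 0 := by
              nlinarith [mul_nonneg h3 (by omega : (0:ℤ) ≤ y2 - x2 - 1),
                mul_nonneg (by omega : (0:ℤ) ≤ x1 - y1 - 1) h4]
            have e3 : y1 = 0 := by omega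
            have e2 : x2 = 0 := by omega
            rw [e2, e3] at h5
            have h7 : x1 * y2 = 1 := by linarith
            have e1 : x1 = 1 := Int.eq_one_of_mul_eq_one_right h1 h7
            exact ⟨e1, e2, e3, by rw [e1] at h7; linarith⟩
          · exfalso
            nlinarith [mul_nonneg h1 (by omega : (0:ℤ) ≤ x2 - y2),
              mul_nonneg (by omega : (0:ℤ) ≤ y1 - x1) h2]
        rw [e1, e2, e3, e4]; rfl

lemma node_surj : ∀ p ∈ S, ∃ w, node w = p := fun p hp =>
  node_surj_aux (p.1.1 + p.1.2 + p.2.1 + p.2.2).toNat p hp le_rfl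

noncomputable def eqv : List Bool ≃ S :=
  Equiv.ofBijective (fun w => ⟨node w, node_mem w⟩)
    ⟨fun w w' h => node_inj (by simpa using congrArg Subtype.val h),
     fun p => by obtain ⟨w, hw⟩ := node_surj p.1 p.2; exact ⟨w, Subtype.ext hw⟩⟩


/-- real pair values along the tree -/
def ab (x y : ℝ) : List Bool → ℝ × ℝ
  | [] => (x, y)
  | b :: w => if b then ((ab x y w).1, (ab x y w).1 + (ab x y w).2)
      else ((ab x y w).1 + (ab x y w).2, (ab x y w).2)

def level : ℕ → Finset (List Bool)
  | 0 => {[]}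
  | n + 1 => (level n).image (List.cons true) ∪ (level n).image (List.cons false)

lemma mem_level {w : List Bool} {n : ℕ} : w ∈ level n ↔ w.length = n := by
  induction n generalizing w with
  | zero => cases w <;> simp [level]
  | succ n ih =>
    cases w with
    | nil => simp [level]
    | cons b w =>
      cases b <;> simp [level, ih]

lemma sum_level_succ (G : List Bool → ℝ) (n : ℕ) :
    ∑ w ∈ level (n + 1), G w = ∑ w ∈ level n, (G (true :: w) + G (false :: w)) := by
  have hdisj : Disjoint ((level n).image (List.cons true)) ((level n).image (List.cons false)) := by
    rw [Finset.disjoint_left]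
    rintro a ha hb
    simp only [Finset.mem_image] at ha hb
    obtain ⟨u, -, hu⟩ := ha
    obtain ⟨v, -, hv⟩ := hb
    rw [← hu] at hv
    injection hv with h1 _
    exact Bool.noConfusion h1
  rw [show level (n + 1) = (level n).image (List.cons true) ∪ (level n).image (List.cons false) from rfl,
    Finset.sum_union hdisj, Finset.sum_image (fun _ _ _ _ h => by injection h),
    Finset.sum_image (fun _ _ _ _ h => by injection h), ← Finset.sum_add_distrib]

def tree : ℕ → Finset (List Bool)
  | 0 => ∅
  | n + 1 => tree n ∪ level n

lemma mem_tree {w : List Bool} {n : ℕ} : w ∈ tree n ↔ w.length < n := by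
  induction n with
  | zero => simp [tree]
  | succ n ih => simp [tree, Finset.mem_union, ih, mem_level]; omega

lemma ab_ge {x y : ℝ} (hx : 1 ≤ x) (hy : 1 ≤ y) (w : List Bool) : 1 ≤ (ab x y w).1 ∧ 1 ≤ (ab x y w).2 := by
  induction w with
  | nil => exact ⟨hx, hy⟩
  | cons b w ih => cases b <;> simp only [ab, if_true, if_false, Bool.false_eq_true,
      ite_false, ite_true] <;> constructor <;> linarith [ih.1, ih.2]

lemma ab_sum_ge {x y : ℝ} (hx : 1 ≤ x) (hy : 1 ≤ y) (w : List Bool) : (w.length : ℝ) + 2 ≤ (ab x y w).1 + (ab x y w).2 := by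
  induction w with
  | nil => simp only [ab, List.length_nil, Nat.cast_zero, zero_add]; linarith
  | cons b w ih =>
    have h := ab_ge hx hy w
    cases b <;> simp only [ab, if_true, if_false, Bool.false_eq_true, ite_false, ite_true,
      List.length_cons] <;> push_cast <;> linarith [h.1, h.2]



noncomputable def F (c x y : ℝ) (w : List Bool) : ℝ :=
  c / ((ab x y w).1 ^ 3 * (ab x y w).2 ^ 3)

lemma F_nil (c x y : ℝ) : F c x y [] = c / (x ^ 3 * y ^ 3) := rfl

lemma F_nonneg {c : ℝ} (hc : 0 ≤ c) {x y : ℝ} (hx : 1 ≤ x) (hy : 1 ≤ y) (w : List Bool) :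
    0 ≤ F c x y w := by
  have h := ab_ge hx hy (x := x) (y := y) w
  have h1 : (0:ℝ) < (ab x y w).1 := by linarith [h.1]
  have h2 : (0:ℝ) < (ab x y w).2 := by linarith [h.2]
  exact div_nonneg hc (le_of_lt (mul_pos (pow_pos h1 3) (pow_pos h2 3)))

lemma g_eq {c x y : ℝ} (hx : 1 ≤ x) (hy : 1 ≤ y) (w : List Bool) :
    F c x y w - F c x y (true :: w) - F c x y (false :: w) =
      3 * c / ((ab x y w).1 ^ 2 * (ab x y w).2 ^ 2 *
        ((ab x y w).1 + (ab x y w).2) ^ 2) := by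
  obtain ⟨ha, hb⟩ := ab_ge hx hy (x := x) (y := y) w
  set a := (ab x y w).1
  set b := (ab x y w).2
  have ha0 : (0:ℝ) < a := by linarith
  have hb0 : (0:ℝ) < b := by linarith
  have hab : (0:ℝ) < a + b := by linarith
  have e1 : ab x y (true :: w) = (a, a + b) := by simp [ab]; exact ⟨rfl, rfl⟩
  have e2 : ab x y (false :: w) = (a + b, b) := by simp [ab]; exact ⟨rfl, rfl⟩
  simp only [F, e1, e2]
  change c / (a ^ 3 * b ^ 3) - c / (a ^ 3 * (a + b) ^ 3) - c / ((a + b) ^ 3 * b ^ 3) =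
    3 * c / (a ^ 2 * b ^ 2 * (a + b) ^ 2)
  field_simp
  ring

lemma prod_inv {x y : ℝ} (hx : 1 ≤ x) (hy : 1 ≤ y) (n : ℕ) :
    ∑ w ∈ level n, 1 / ((ab x y w).1 * (ab x y w).2) = 1 / (x * y) := by
  induction n with
  | zero => simp [level, ab]
  | succ n ih =>
    rw [sum_level_succ]
    rw [← ih]
    apply Finset.sum_congr rfl
    intro w _
    obtain ⟨ha, hb⟩ := ab_ge hx hy (x := x) (y := y) w
    set a := (ab x y w).1
    set b := (ab x y w).2
    have ha0 : (0:ℝ) < a := by linarith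
    have hb0 : (0:ℝ) < b := by linarith
    have hab : (0:ℝ) < a + b := by linarith
    have e1 : ab x y (true :: w) = (a, a + b) := by simp [ab]; exact ⟨rfl, rfl⟩
    have e2 : ab x y (false :: w) = (a + b, b) := by simp [ab]; exact ⟨rfl, rfl⟩
    simp only [e1, e2]
    field_simp
    ring

lemma level_sum_F_le {c x y : ℝ} (hc : 0 ≤ c) (hx : 1 ≤ x) (hy : 1 ≤ y) (n : ℕ) :
    ∑ w ∈ level n, F c x y w ≤ 4 * c / (n + 1) := by
  have key : ∀ w ∈ level n,
      F c x y w ≤ 4 * c / ((n : ℝ) + 2) ^ 2 * (1 / ((ab x y w).1 * (ab x y w).2)) := by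
    intro w hw
    obtain ⟨ha, hb⟩ := ab_ge hx hy (x := x) (y := y) w
    have hs : (n : ℝ) + 2 ≤ (ab x y w).1 + (ab x y w).2 := by
      have := ab_sum_ge hx hy (x := x) (y := y) w
      rwa [mem_level.1 hw] at this
    set a := (ab x y w).1
    set b := (ab x y w).2
    have ha0 : (0:ℝ) < a := by linarith
    have hb0 : (0:ℝ) < b := by linarith
    rw [show 4 * c / ((n : ℝ) + 2) ^ 2 * (1 / (a * b)) = 4 * c / (((n : ℝ) + 2) ^ 2 * (a * b))
      by rw [div_mul_div_comm, mul_one]]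
    rw [F, div_le_div_iff₀ (by positivity) (by positivity)]
    have h4 : a + b ≤ 2 * (a * b) := by nlinarith
    have hA : ((n:ℝ) + 2) ^ 2 ≤ (a + b) ^ 2 := by nlinarith
    have hB : (a + b) ^ 2 ≤ 4 * (a * b) ^ 2 := by nlinarith [mul_pos ha0 hb0]
    have h3 : ((n:ℝ) + 2) ^ 2 ≤ 4 * (a * b) ^ 2 := le_trans hA hB
    calc c * (((n:ℝ) + 2) ^ 2 * (a * b)) ≤ c * (4 * (a * b) ^ 2 * (a * b)) := by
          apply mul_le_mul_of_nonneg_left ?_ hc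
          apply mul_le_mul_of_nonneg_right h3 (by positivity)
      _ = 4 * c * (a ^ 3 * b ^ 3) := by ring
  calc ∑ w ∈ level n, F c x y w
      ≤ ∑ w ∈ level n, 4 * c / ((n : ℝ) + 2) ^ 2 * (1 / ((ab x y w).1 * (ab x y w).2)) :=
        Finset.sum_le_sum key
    _ = 4 * c / ((n : ℝ) + 2) ^ 2 * (1 / (x * y)) := by
        rw [← Finset.mul_sum, prod_inv hx hy]
    _ ≤ 4 * c / ((n : ℝ) + 1) := by
        have hxy : (1:ℝ) ≤ x * y := by nlinarith
        have h1 : 1 / (x * y) ≤ 1 := by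
          rw [div_le_one (by linarith)]; linarith
        have h2 : 4 * c / ((n : ℝ) + 2) ^ 2 * (1 / (x * y)) ≤ 4 * c / ((n : ℝ) + 2) ^ 2 * 1 :=
          mul_le_mul_of_nonneg_left h1 (by positivity)
        have h3 : 4 * c / ((n : ℝ) + 2) ^ 2 ≤ 4 * c / ((n : ℝ) + 1) := by
          apply div_le_div_of_nonneg_left (by linarith) (by positivity) ?_
          nlinarith [(show (0:ℝ) ≤ (n:ℝ) from Nat.cast_nonneg n)]
        calc _ ≤ _ := h2
          _ = 4 * c / ((n : ℝ) + 2) ^ 2 := mul_one _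
          _ ≤ _ := h3

lemma sum_tree_eq {c x y : ℝ} (hx : 1 ≤ x) (hy : 1 ≤ y) (n : ℕ) :
    ∑ w ∈ tree n, (F c x y w - F c x y (true :: w) - F c x y (false :: w)) =
      F c x y [] - ∑ w ∈ level n, F c x y w := by
  induction n with
  | zero => simp [tree, level]
  | succ n ih =>
    have hdisj : Disjoint (tree n) (level n) := by
      rw [Finset.disjoint_left]
      intro w hw hl
      rw [mem_tree] at hw
      rw [mem_level] at hl
      omega
    rw [show tree (n + 1) = tree n ∪ level n from rfl, Finset.sum_union hdisj, ih,
      sum_level_succ (F c x y) n]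
    have : ∑ w ∈ level n, (F c x y w - F c x y (true :: w) - F c x y (false :: w)) =
        ∑ w ∈ level n, F c x y w -
          ∑ w ∈ level n, (F c x y (true :: w) + F c x y (false :: w)) := by
      rw [← Finset.sum_sub_distrib]
      apply Finset.sum_congr rfl
      intro w _
      ring
    rw [this]
    ring

lemma hasSum_tele {c x y : ℝ} (hc : 0 < c) (hx : 1 ≤ x) (hy : 1 ≤ y) :
    HasSum (fun w => F c x y w - F c x y (true :: w) - F c x y (false :: w))
      (c / (x ^ 3 * y ^ 3)) := by
  set g := fun w => F c x y w - F c x y (true :: w) - F c x y (false :: w) with hg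
  have hg0 : ∀ w, 0 ≤ g w := by
    intro w
    rw [hg]
    simp only
    rw [g_eq hx hy]
    obtain ⟨ha, hb⟩ := ab_ge hx hy (x := x) (y := y) w
    have ha0 : (0:ℝ) < (ab x y w).1 := by linarith
    have hb0 : (0:ℝ) < (ab x y w).2 := by linarith
    positivity
  rw [← F_nil c x y]
  apply hasSum_of_isLUB_of_nonneg _ hg0
  constructor
  · rintro r ⟨s, rfl⟩
    have hsub : s ⊆ tree (s.sup List.length + 1) := by
      intro w hw
      rw [mem_tree]
      exact Nat.lt_succ_of_le (Finset.le_sup hw)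
    calc ∑ w ∈ s, g w ≤ ∑ w ∈ tree (s.sup List.length + 1), g w :=
          Finset.sum_le_sum_of_subset_of_nonneg hsub (fun w _ _ => hg0 w)
      _ = F c x y [] - ∑ w ∈ level (s.sup List.length + 1), F c x y w :=
          sum_tree_eq hx hy _
      _ ≤ F c x y [] := by
          have : 0 ≤ ∑ w ∈ level (s.sup List.length + 1), F c x y w :=
            Finset.sum_nonneg fun w _ => F_nonneg hc.le hx hy w
          linarith
  · rintro r hr
    by_contra hlt
    push_neg at hlt
    obtain ⟨n, hn⟩ := exists_nat_gt (4 * c / ((F c x y [] - r) / 2))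
    have hε : 0 < (F c x y [] - r) / 2 := by linarith
    have hL : ∑ w ∈ level n, F c x y w ≤ 4 * c / ((n : ℝ) + 1) := level_sum_F_le hc.le hx hy n
    have hL2 : 4 * c / ((n : ℝ) + 1) < (F c x y [] - r) / 2 := by
      rw [div_lt_iff₀ (by positivity)]
      rw [div_lt_iff₀ hε] at hn
      nlinarith [hε]
    have htr : ∑ w ∈ tree n, g w ≤ r := hr ⟨tree n, rfl⟩
    have := sum_tree_eq (c := c) hx hy n
    rw [← hg] at this
    linarith


end Topo

theorem stmt_5 (A B C : ℤ) (hA : 0 < A) (hB : 0 < B) (hC : 0 < C)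
    (hD : B ^ 2 = 4 * A * C) :
    HasSum
      (fun p : S =>
        1 / (eLab A B C p.val.1 p.val.2 * eLab A B C p.val.1 (p.val.1 + p.val.2) *
          eLab A B C p.val.2 (p.val.1 + p.val.2)))
      ((1 / 3) * (1 / (B : ℝ)) ^ 3) := by
  have hA1 : (1:ℝ) ≤ (A:ℝ) := by exact_mod_cast hA
  have hx : (1:ℝ) ≤ 2 * (A:ℝ) := by linarith
  have hy : (1:ℝ) ≤ (B:ℝ) := by exact_mod_cast hB
  have hBC : ((B:ℝ)) ^ 2 = 4 * (A:ℝ) * (C:ℝ) := by exact_mod_cast hD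
  have hc : 0 < (2 * (A:ℝ)) ^ 3 / 3 := by positivity
  have hmain := Topo.hasSum_tele hc hx hy
  rw [← Equiv.hasSum_iff Topo.eqv]
  have habv : ∀ w : List Bool,
      Topo.ab (2 * (A:ℝ)) (B:ℝ) w =
        (2 * (A:ℝ) * ((Topo.node w).1.1 : ℝ) + (B:ℝ) * ((Topo.node w).1.2 : ℝ),
         2 * (A:ℝ) * ((Topo.node w).2.1 : ℝ) + (B:ℝ) * ((Topo.node w).2.2 : ℝ)) := by
    intro w
    induction w with
    | nil => simp [Topo.ab, Topo.node]
    | cons b w ih =>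
      cases b <;>
        simp only [Topo.ab, Topo.node, if_true, if_false, Bool.false_eq_true, ite_false,
          ite_true, ih, Prod.fst_add, Prod.snd_add, Prod.mk.injEq] <;>
        constructor <;> push_cast <;> ring
  have heq : ∀ u v : ℤ × ℤ, eLab A B C u v =
      (2 * (A:ℝ) * (u.1 : ℝ) + (B:ℝ) * (u.2 : ℝ)) *
        (2 * (A:ℝ) * (v.1 : ℝ) + (B:ℝ) * (v.2 : ℝ)) / (2 * (A:ℝ)) := by
    intro u v
    rw [eq_div_iff (by positivity)]
    simp only [eLab, q, Prod.fst_add, Prod.snd_add]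
    push_cast
    linear_combination (-(u.2 : ℝ) * (v.2 : ℝ)) * hBC
  convert hmain using 1
  · funext w
    show 1 / (eLab A B C (Topo.node w).1 (Topo.node w).2 *
        eLab A B C (Topo.node w).1 ((Topo.node w).1 + (Topo.node w).2) *
        eLab A B C (Topo.node w).2 ((Topo.node w).1 + (Topo.node w).2)) = _
    have haa := (Topo.ab_ge hx hy (x := 2 * (A:ℝ)) (y := (B:ℝ)) w).1
    have hbb := (Topo.ab_ge hx hy (x := 2 * (A:ℝ)) (y := (B:ℝ)) w).2
    rw [habv w] at haa hbb
    simp only at haa hbb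
    have LabEq : 2 * (A:ℝ) * ((((Topo.node w).1 + (Topo.node w).2).1 : ℤ) : ℝ) +
        (B:ℝ) * ((((Topo.node w).1 + (Topo.node w).2).2 : ℤ) : ℝ) =
        (2 * (A:ℝ) * ((Topo.node w).1.1 : ℝ) + (B:ℝ) * ((Topo.node w).1.2 : ℝ)) +
        (2 * (A:ℝ) * ((Topo.node w).2.1 : ℝ) + (B:ℝ) * ((Topo.node w).2.2 : ℝ)) := by
      simp only [Prod.fst_add, Prod.snd_add]
      push_cast
      ring
    rw [heq, heq, heq, LabEq, Topo.g_eq hx hy w, habv w]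
    simp only
    set a := 2 * (A:ℝ) * ((Topo.node w).1.1 : ℝ) + (B:ℝ) * ((Topo.node w).1.2 : ℝ)
    set b := 2 * (A:ℝ) * ((Topo.node w).2.1 : ℝ) + (B:ℝ) * ((Topo.node w).2.2 : ℝ)
    have ha0 : (0:ℝ) < a := by linarith
    have hb0 : (0:ℝ) < b := by linarith
    have hab : (0:ℝ) < a + b := by linarith
    have hA0 : (0:ℝ) < 2 * (A:ℝ) := by linarith
    field_simp
  · have hB0 : (0:ℝ) < (B:ℝ) := by linarith
    have hA0 : (0:ℝ) < 2 * (A:ℝ) := by linarith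
    field_simp
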